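/- (Parabolic solution of the attractive Toda system.) For $n \ge 2$, $M, \kappa > 0$, the functions $a_k(t)$ defined (up to a common translation) by $a_{k+1}(t) - a_k(t) = 2\log(\kappa t) - \log(M k(n-k)/2)$ and momenta $p_k(t) = -M(n+1-2k)/t$ satisfy, for all $t > 0$ large enough that all $a_{k+1}-a_k > 0$: $a_k'(t) = M^{-1} p_k(t)$ and $p_k'(t) = 2\kappa^2 (e^{-(a_{k+1}(t)-a_k(t))} - e^{-(a_k(t)-a_{k-1}(t))})$, with the convention $a_0 = -\infty$, $a_{n+1} = +\infty$ (so the corresponding exponential terms vanish). -/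

import Mathlib

/-- Parabolic solution of the attractive Toda system. With the explicit choice (`k` is the
0-based index, so `a k` stands for `a_{k+1}`, `p k` for `p_{k+1} = -M(n+1-2(k+1))/t`)
the functions satisfy the prescribed mutual distances
`a_{k+1}(t) - a_k(t) = 2 log(κ t) - log(M k(n-k)/2)` and the Toda system
`a_k' = M⁻¹ p_k`, `p_k' = 2κ²(e^{-(a_{k+1}-a_k)} - e^{-(a_k-a_{k-1})})`, with the
convention that the boundary exponential terms vanish. -/
theorem stmt_15 (n : ℕ) (hn : 2 ≤ n) (M κ c : ℝ) (hM : 0 < M) (hκ : 0 < κ)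
    (a : ℕ → ℝ → ℝ)
    (ha : ∀ k t, a k t = c - ((n:ℝ) - 1 - 2*(k:ℝ)) * Real.log t
        + ∑ j ∈ Finset.range k,
            (2 * Real.log κ - Real.log (M * ((j:ℝ) + 1) * ((n:ℝ) - ((j:ℝ) + 1)) / 2)))
    (p : ℕ → ℝ → ℝ)
    (hp : ∀ k t, p k t = -M * ((n:ℝ) - 1 - 2*(k:ℝ)) / t)
    (t : ℝ) (ht : 0 < t)
    (hgap : ∀ k : ℕ, k + 1 < n → 0 < a (k+1) t - a k t) :
    (∀ k : ℕ, k + 1 < n →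
        a (k+1) t - a k t
          = 2 * Real.log (κ * t) - Real.log (M * ((k:ℝ) + 1) * ((n:ℝ) - ((k:ℝ) + 1)) / 2))
    ∧ (∀ k < n, HasDerivAt (a k) (M⁻¹ * p k t) t)
    ∧ (∀ k < n, HasDerivAt (p k)
        (2 * κ^2 * ((if k + 1 < n then Real.exp (-(a (k+1) t - a k t)) else 0)
          - (if k = 0 then 0 else Real.exp (-(a k t - a (k-1) t))))) t) := by
  have part1 : ∀ k : ℕ, k + 1 < n →
      a (k+1) t - a k t
        = 2 * Real.log (κ * t) - Real.log (M * ((k:ℝ) + 1) * ((n:ℝ) - ((k:ℝ) + 1)) / 2) := by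
    intro k hk
    rw [ha, ha, Finset.sum_range_succ, Real.log_mul hκ.ne' ht.ne']
    push_cast
    ring
  refine ⟨part1, ?_, ?_⟩
  · intro k hk
    have hd : HasDerivAt (a k) (-(((n:ℝ) - 1 - 2*(k:ℝ)) * t⁻¹)) t := by
      have h1 : HasDerivAt (fun s => c - ((n:ℝ) - 1 - 2*(k:ℝ)) * Real.log s
          + ∑ j ∈ Finset.range k,
            (2 * Real.log κ - Real.log (M * ((j:ℝ) + 1) * ((n:ℝ) - ((j:ℝ) + 1)) / 2)))
          (-(((n:ℝ) - 1 - 2*(k:ℝ)) * t⁻¹)) t := by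
        exact (((Real.hasDerivAt_log ht.ne').const_mul _).const_sub c).add_const _
      have h2 : a k = fun s => c - ((n:ℝ) - 1 - 2*(k:ℝ)) * Real.log s
          + ∑ j ∈ Finset.range k,
            (2 * Real.log κ - Real.log (M * ((j:ℝ) + 1) * ((n:ℝ) - ((j:ℝ) + 1)) / 2)) :=
        funext (ha k)
      rw [h2]; exact h1
    convert hd using 1
    rw [hp]
    field_simp
  · intro k hk
    -- value of exp terms
    have key : ∀ k : ℕ, k + 1 < n → Real.exp (-(a (k+1) t - a k t))
        = M * ((k:ℝ) + 1) * ((n:ℝ) - ((k:ℝ) + 1)) / 2 / (κ * t)^2 := by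
      intro k hk
      have hX : 0 < M * ((k:ℝ) + 1) * ((n:ℝ) - ((k:ℝ) + 1)) / 2 := by
        have : ((k:ℝ)) + 1 < n := by exact_mod_cast hk
        have h1 : (0:ℝ) < (k:ℝ) + 1 := by positivity
        have h2 : (0:ℝ) < (n:ℝ) - ((k:ℝ)+1) := by linarith
        have := mul_pos (mul_pos hM h1) h2
        linarith
      have hκt : (0:ℝ) < κ * t := by positivity
      have h2l : 2 * Real.log (κ*t) = Real.log ((κ*t)^2) := by
        rw [Real.log_pow]; norm_num
      rw [part1 k hk, neg_sub, h2l, ← Real.log_div hX.ne' (by positivity),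
        Real.exp_log (by positivity)]
    have hdp : HasDerivAt (p k) (M * ((n:ℝ) - 1 - 2*(k:ℝ)) / t^2) t := by
      have h1 : HasDerivAt (fun s : ℝ => (-M * ((n:ℝ) - 1 - 2*(k:ℝ))) * s⁻¹)
          ((-M * ((n:ℝ) - 1 - 2*(k:ℝ))) * (-(t^2)⁻¹)) t := (hasDerivAt_inv ht.ne').const_mul _
      have h2 : (fun s : ℝ => (-M * ((n:ℝ) - 1 - 2*(k:ℝ))) * s⁻¹) = p k := by
        funext s; rw [hp]; ring
      rw [h2] at h1
      convert h1 using 1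
      field_simp
    convert hdp using 1
    have hκt2 : (κ * t)^2 ≠ 0 := by positivity
    rcases Nat.eq_zero_or_pos k with h0 | h0
    · subst h0
      have hk1 : 1 < n := lt_of_lt_of_le one_lt_two hn
      rw [if_pos (by simpa using hk1), if_pos rfl, key 0 (by simpa using hk1)]
      push_cast
      field_simp
      ring
    · have hkne : k ≠ 0 := h0.ne'
      have hk1n : (k - 1) + 1 < n := by omega
      have hkk : (k - 1) + 1 = k := by omega
      have hcast : ((k - 1 : ℕ) : ℝ) + 1 = (k : ℝ) := by
        have : ((k - 1 : ℕ) : ℝ) = (k : ℝ) - 1 := by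
          push_cast [Nat.cast_sub h0]; ring
        rw [this]; ring
      have key2 : Real.exp (-(a k t - a (k-1) t))
          = M * (k:ℝ) * ((n:ℝ) - (k:ℝ)) / 2 / (κ * t)^2 := by
        have := key (k-1) hk1n
        rw [hkk, hcast] at this
        exact this
      rw [if_neg hkne, key2]
      by_cases hkn : k + 1 < n
      · rw [if_pos hkn, key k hkn]
        field_simp
        ring
      · have : k + 1 = n := by omega
        rw [if_neg hkn]
        have hnk : (n : ℝ) = (k : ℝ) + 1 := by exact_mod_cast this.symm
        rw [hnk]
        field_simp
        ring
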